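/- arXiv:2112.04197 — 2 statements merged into one kernel-verified Lean document; each statement's English description precedes it below -/
import Mathlib

section
/- Let 𝓜 be a nonempty finite family of subsets of [n], μ, μ̂ : [n] → ℝ, and θ ≥ 0 such that |μ̂(M) − μ(M)| ≤ θ/2 for all M ∈ 𝓜. Let M̂ maximize μ̂ over 𝓜 and μ* = max_{M∈𝓜} μ(M). Suppose arm a is in every optimal set, some set in 𝓜 avoids a, and Δ(a) = μ* − max_{M∈𝓜, a∉M} μ(M) > 2θ. Let M̃ maximize μ̂ over {M ∈ 𝓜 : a ∉ M}. Then the empirical gap satisfies μ̂(M̂) − μ̂(M̃) > θ. -/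
theorem stmt_5 (n : ℕ) (μ μhat : Fin n → ℝ) (𝓜 : Finset (Finset (Fin n))) (hne : 𝓜.Nonempty)
    (θ : ℝ) (hθ : 0 ≤ θ)
    (hclose : ∀ M ∈ 𝓜, |(∑ i ∈ M, μhat i) - ∑ i ∈ M, μ i| ≤ θ / 2)
    (Mhat : Finset (Fin n)) (hMhat : Mhat ∈ 𝓜)
    (hemp : ∀ M ∈ 𝓜, (∑ i ∈ M, μhat i) ≤ ∑ i ∈ Mhat, μhat i)
    (a : Fin n)
    (hopt : ∀ M ∈ 𝓜, (∑ i ∈ M, μ i) = 𝓜.sup' hne (fun M => ∑ i ∈ M, μ i) → a ∈ M)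
    (hfil : (𝓜.filter fun M => a ∉ M).Nonempty)
    (hgap : 2 * θ < 𝓜.sup' hne (fun M => ∑ i ∈ M, μ i)
        - (𝓜.filter fun M => a ∉ M).sup' hfil (fun M => ∑ i ∈ M, μ i))
    (Mtil : Finset (Fin n)) (hMtil : Mtil ∈ 𝓜.filter fun M => a ∉ M)
    (hempTil : ∀ M ∈ 𝓜.filter fun M => a ∉ M, (∑ i ∈ M, μhat i) ≤ ∑ i ∈ Mtil, μhat i) :
    θ < (∑ i ∈ Mhat, μhat i) - ∑ i ∈ Mtil, μhat i := by
  obtain ⟨Mstar, hMstar, hMstarEq⟩ := Finset.exists_mem_eq_sup' hne (fun M => ∑ i ∈ M, μ i)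
  have h1 : ∑ i ∈ Mstar, μhat i ≤ ∑ i ∈ Mhat, μhat i := hemp _ hMstar
  have h2 := abs_le.mp (hclose _ hMstar)
  have hMtil' : Mtil ∈ 𝓜 := (Finset.mem_filter.mp hMtil).1
  have h3 := abs_le.mp (hclose _ hMtil')
  have h4 : ∑ i ∈ Mtil, μ i ≤ (𝓜.filter fun M => a ∉ M).sup' hfil (fun M => ∑ i ∈ M, μ i) :=
    Finset.le_sup' (f := fun M => ∑ i ∈ M, μ i) hMtil
  linarith
end

section
/- Let 𝓜 be a nonempty finite family of subsets of [n], μ, μ̂ : [n] → ℝ, θ ≥ 0, with |μ̂(M) − μ(M)| ≤ θ/2 for all M ∈ 𝓜. Let μ* = max_{M∈𝓜} μ(M) and let M* be some optimal set. Suppose arm a satisfies a ∉ M* for some optimal M*. Let M̂ maximize μ̂ over 𝓜 and M̃ maximize μ̂ over {M ∈ 𝓜 : a ∉ M}. Then μ̂(M̂) − μ̂(M̃) ≤ θ. (Consequently, an arm outside some optimal set can never be accepted with threshold θ.) -/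
theorem stmt_6 (n : ℕ) (μ μhat : Fin n → ℝ) (𝓜 : Finset (Finset (Fin n))) (hne : 𝓜.Nonempty)
    (θ : ℝ) (hθ : 0 ≤ θ)
    (hclose : ∀ M ∈ 𝓜, |(∑ i ∈ M, μhat i) - ∑ i ∈ M, μ i| ≤ θ / 2)
    (Mstar : Finset (Fin n)) (hMstar : Mstar ∈ 𝓜)
    (hopt : (∑ i ∈ Mstar, μ i) = 𝓜.sup' hne (fun M => ∑ i ∈ M, μ i))
    (a : Fin n) (ha : a ∉ Mstar)
    (Mhat : Finset (Fin n)) (hMhat : Mhat ∈ 𝓜)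
    (hemp : ∀ M ∈ 𝓜, (∑ i ∈ M, μhat i) ≤ ∑ i ∈ Mhat, μhat i)
    (Mtil : Finset (Fin n)) (hMtil : Mtil ∈ 𝓜.filter fun M => a ∉ M)
    (hempTil : ∀ M ∈ 𝓜.filter fun M => a ∉ M, (∑ i ∈ M, μhat i) ≤ ∑ i ∈ Mtil, μhat i) :
    (∑ i ∈ Mhat, μhat i) - (∑ i ∈ Mtil, μhat i) ≤ θ := by
  have h1 := abs_le.1 (hclose Mhat hMhat)
  have h2 := abs_le.1 (hclose Mstar hMstar)
  have h3 : (∑ i ∈ Mhat, μ i) ≤ ∑ i ∈ Mstar, μ i := by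
    rw [hopt]; exact Finset.le_sup' (fun M => ∑ i ∈ M, μ i) hMhat
  have h4 : (∑ i ∈ Mstar, μhat i) ≤ ∑ i ∈ Mtil, μhat i :=
    hempTil Mstar (Finset.mem_filter.2 ⟨hMstar, ha⟩)
  linarith
end
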